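/- arXiv:2401.11384 — 2 statements merged into one kernel-verified Lean document; each statement's English description precedes it below -/
import Mathlib

section
/- For α ∈ (1/2, 1) and a symmetric α-stable random variable L₁ on ℝ (characteristic function E[e^{iξL₁}] = e^{-|ξ|^α}), there exist constants c > 0 and ϱ > 0 such that c = α · E[sgn(c + ϱL₁)·|c + ϱL₁|^{1-α}]. -/
open MeasureTheory Real Set

open Filter
open scoped ENNReal Topology

lemma aux_measurable_sign : Measurable Real.sign := by
  have h : Real.sign = fun r : ℝ => if r < 0 then (-1:ℝ) else if 0 < r then 1 else 0 := by
    funext r; rfl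
  rw [h]
  refine Measurable.ite ?_ measurable_const (Measurable.ite ?_ measurable_const measurable_const)
  · exact measurableSet_Iio
  · exact measurableSet_Ioi

lemma aux_sign_const_mul {c : ℝ} (hc : 0 < c) (u : ℝ) : Real.sign (c * u) = Real.sign u := by
  rcases lt_trichotomy u 0 with h | h | h
  · rw [Real.sign_of_neg h, Real.sign_of_neg (mul_neg_of_pos_of_neg hc h)]
  · simp [h]
  · rw [Real.sign_of_pos h, Real.sign_of_pos (mul_pos hc h)]

lemma aux_rpow_add_le {a b p : ℝ} (ha : 0 ≤ a) (hb : 0 ≤ b) (hp : 0 ≤ p) (hp1 : p ≤ 1) :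
    (a + b) ^ p ≤ a ^ p + b ^ p := by
  have h := NNReal.rpow_add_le_add_rpow a.toNNReal b.toNNReal hp hp1
  have h2 := NNReal.coe_le_coe.2 h
  push_cast at h2
  rwa [Real.coe_toNNReal _ ha, Real.coe_toNNReal _ hb] at h2

lemma aux_abs_sign_mul (u p : ℝ) : |Real.sign u * |u| ^ p| ≤ |u| ^ p := by
  have hnn : (0:ℝ) ≤ |u| ^ p := Real.rpow_nonneg (abs_nonneg u) p
  rw [abs_mul, abs_of_nonneg hnn]
  rcases Real.sign_apply_eq u with h | h | h <;> rw [h] <;> simp [hnn]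

lemma aux_lint_ne_top {F : ℝ → ℝ} {a b : ℝ} (ha : -1 < a) (hb : b < -1)
    (h1 : ∀ u : ℝ, 0 < u → u ≤ 1 → F u ≤ u ^ a) (h2 : ∀ u : ℝ, 1 < u → F u ≤ 2 * u ^ b) :
    ∫⁻ u in Ioi (0:ℝ), ENNReal.ofReal (F u) ≠ ∞ := by
  have hsplit : Ioc (0:ℝ) 1 ∪ Ioi 1 = Ioi 0 := Ioc_union_Ioi_eq_Ioi zero_le_one
  rw [← hsplit, lintegral_union measurableSet_Ioi (Ioc_disjoint_Ioi le_rfl)]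
  have hI1 : IntegrableOn (fun u : ℝ => u ^ a) (Ioo 0 1) :=
    (intervalIntegral.integrableOn_Ioo_rpow_iff zero_lt_one).2 ha
  have hI2 : IntegrableOn (fun u : ℝ => u ^ b) (Ioi 1) :=
    integrableOn_Ioi_rpow_of_lt hb zero_lt_one
  have e1 : ∫⁻ u in Ioc (0:ℝ) 1, ENNReal.ofReal (F u)
      ≤ ∫⁻ u in Ioo (0:ℝ) 1, (‖(u:ℝ) ^ a‖₊ : ℝ≥0∞) := by
    rw [show (volume.restrict (Ioc (0:ℝ) 1)) = volume.restrict (Ioo (0:ℝ) 1) from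
      (Measure.restrict_congr_set Ioo_ae_eq_Ioc).symm]
    refine lintegral_mono_ae ?_
    filter_upwards [ae_restrict_mem measurableSet_Ioo] with u hu
    exact (ENNReal.ofReal_le_ofReal (h1 u hu.1 hu.2.le)).trans (Real.ofReal_le_enorm _)
  have e2 : ∫⁻ u in Ioi (1:ℝ), ENNReal.ofReal (F u)
      ≤ 2 * ∫⁻ u in Ioi (1:ℝ), (‖(u:ℝ) ^ b‖₊ : ℝ≥0∞) := by
    rw [← lintegral_const_mul' 2 _ (by norm_num)]
    refine lintegral_mono_ae ?_
    filter_upwards [ae_restrict_mem measurableSet_Ioi] with u hu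
    calc ENNReal.ofReal (F u) ≤ ENNReal.ofReal (2 * u ^ b) :=
          ENNReal.ofReal_le_ofReal (h2 u hu)
      _ = ENNReal.ofReal 2 * ENNReal.ofReal (u ^ b) := ENNReal.ofReal_mul (by norm_num)
      _ ≤ 2 * (‖(u:ℝ) ^ b‖₊ : ℝ≥0∞) := by
          rw [ENNReal.ofReal_ofNat]
          exact mul_le_mul_right (Real.ofReal_le_enorm _) 2
  have f1 : ∫⁻ u in Ioo (0:ℝ) 1, (‖(u:ℝ) ^ a‖₊ : ℝ≥0∞) < ∞ := hI1.2
  have f2 : ∫⁻ u in Ioi (1:ℝ), (‖(u:ℝ) ^ b‖₊ : ℝ≥0∞) < ∞ := hI2.2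
  refine ENNReal.add_ne_top.2 ⟨(e1.trans_lt f1).ne, (e2.trans_lt ?_).ne⟩
  exact ENNReal.mul_lt_top (by norm_num) f2

lemma aux_scale {f : ℝ → ℝ≥0∞} (hf : Measurable f) {c : ℝ} (hc : 0 < c) :
    ∫⁻ ξ in Ioi (0:ℝ), f (c * ξ) = ENNReal.ofReal c⁻¹ * ∫⁻ u in Ioi (0:ℝ), f u := by
  have hm : Measurable fun ξ : ℝ => c * ξ := measurable_const_mul c
  have hpre : (fun ξ : ℝ => c * ξ) ⁻¹' (Ioi 0) = Ioi 0 := by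
    ext ξ; simp only [mem_preimage, mem_Ioi]
    constructor
    · intro h
      by_contra hx
      push_neg at hx
      nlinarith
    · exact fun h => mul_pos hc h
  have hmap : Measure.map (fun ξ : ℝ => c * ξ) (volume.restrict (Ioi (0:ℝ)))
      = (ENNReal.ofReal c⁻¹) • volume.restrict (Ioi (0:ℝ)) := by
    conv_lhs => rw [← hpre]
    rw [← Measure.restrict_map hm measurableSet_Ioi, Real.map_volume_mul_left hc.ne',
      Measure.restrict_smul, abs_of_nonneg (inv_nonneg.2 hc.le)]
  rw [← lintegral_map hf hm, hmap, lintegral_smul_measure, smul_eq_mul]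

noncomputable def Kp (p : ℝ) : ℝ≥0∞ :=
  ∫⁻ u in Ioi (0:ℝ), ENNReal.ofReal ((1 - Real.cos u) / u ^ (1+p))

lemma Kp_ne_top {p : ℝ} (hp0 : 0 < p) (hp1 : p < 1) : Kp p ≠ ∞ := by
  refine aux_lint_ne_top (a := 1 - p) (b := -(1+p)) (by linarith) (by linarith) ?_ ?_
  · intro u hu hu1
    rw [div_le_iff₀ (Real.rpow_pos_of_pos hu _)]
    have h2 : u ^ (1-p) * u ^ (1+p) = u ^ (2:ℝ) := by
      rw [← Real.rpow_add hu]; norm_num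
    rw [h2, show ((2:ℝ)) = ((2:ℕ):ℝ) by norm_num, Real.rpow_natCast]
    have h3 := Real.one_sub_sq_div_two_le_cos (x := u)
    nlinarith [sq_nonneg u]
  · intro u hu
    have hu0 : (0:ℝ) < u := by linarith
    rw [Real.rpow_neg hu0.le, mul_comm (2:ℝ), ← div_eq_inv_mul]
    have h4 : (0:ℝ) < u ^ (1+p) := Real.rpow_pos_of_pos hu0 _
    have h5 : 1 - Real.cos u ≤ 2 := by linarith [Real.neg_one_le_cos u]
    gcongr

lemma Kp_pos {p : ℝ} (hp0 : 0 < p) (hp1 : p < 1) : Kp p ≠ 0 := by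
  have hlow : ∀ u ∈ Ioo (2:ℝ) 3,
      ENNReal.ofReal ((1:ℝ)/9) ≤ ENNReal.ofReal ((1 - Real.cos u) / u ^ (1+p)) := by
    intro u hu
    apply ENNReal.ofReal_le_ofReal
    have hcos : Real.cos u ≤ 0 := by
      apply Real.cos_nonpos_of_pi_div_two_le_of_le
      · linarith [Real.pi_le_four, hu.1]
      · linarith [Real.pi_gt_three, hu.2]
    have hpow : u ^ (1+p) ≤ 9 := by
      calc u ^ (1+p) ≤ 3 ^ (1+p) :=
            Real.rpow_le_rpow (by linarith [hu.1]) hu.2.le (by linarith)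
        _ ≤ 3 ^ (2:ℝ) := Real.rpow_le_rpow_of_exponent_le (by norm_num) (by linarith)
        _ = 9 := by
            rw [show ((2:ℝ)) = ((2:ℕ):ℝ) by norm_num, Real.rpow_natCast]; norm_num
    exact div_le_div₀ (by linarith) (by linarith) (Real.rpow_pos_of_pos (by linarith [hu.1]) _) hpow
  have h1 : ENNReal.ofReal ((1:ℝ)/9) * volume (Ioo (2:ℝ) 3) ≤ Kp p := by
    calc ENNReal.ofReal ((1:ℝ)/9) * volume (Ioo (2:ℝ) 3)
        = ∫⁻ _ in Ioo (2:ℝ) 3, ENNReal.ofReal ((1:ℝ)/9) := (setLIntegral_const _ _).symm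
      _ ≤ ∫⁻ u in Ioo (2:ℝ) 3, ENNReal.ofReal ((1 - Real.cos u) / u ^ (1+p)) := by
          refine lintegral_mono_ae ?_
          filter_upwards [ae_restrict_mem measurableSet_Ioo] with u hu using hlow u hu
      _ ≤ Kp p := by
          refine lintegral_mono' (Measure.restrict_mono ?_ le_rfl) le_rfl
          intro u hu; exact lt_trans (by norm_num) hu.1
  intro h0
  rw [h0] at h1
  simp only [Real.volume_Ioo, nonpos_iff_eq_zero, mul_eq_zero] at h1
  rcases h1 with h | h
  · exact absurd h (by simp)
  · rw [show (3:ℝ) - 2 = 1 by norm_num] at h; simp at h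

lemma aux_kern_meas {p : ℝ} (hp0 : 0 < p) :
    Measurable fun u : ℝ => ENNReal.ofReal ((1 - Real.cos u) / u ^ (1+p)) := by
  apply ENNReal.measurable_ofReal.comp
  exact (measurable_const.sub Real.measurable_cos).div
    (Real.continuous_rpow_const (by linarith)).measurable

lemma aux_pointwise {p : ℝ} (hp0 : 0 < p) (hp1 : p < 1) (x : ℝ) :
    ∫⁻ ξ in Ioi (0:ℝ), ENNReal.ofReal ((1 - Real.cos (ξ * x)) / ξ ^ (1+p))
      = ENNReal.ofReal (|x| ^ p) * Kp p := by
  rcases eq_or_ne x 0 with rfl | hx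
  · simp [Real.zero_rpow hp0.ne']
  · have hc0 : 0 < |x| := abs_pos.2 hx
    have key : ∀ ξ ∈ Ioi (0:ℝ), ENNReal.ofReal ((1 - Real.cos (ξ * x)) / ξ ^ (1+p))
        = ENNReal.ofReal (|x|^(1+p)) *
          (fun u : ℝ => ENNReal.ofReal ((1 - Real.cos u) / u ^ (1+p))) (|x| * ξ) := by
      intro ξ hξ
      have hξ0 : (0:ℝ) < ξ := hξ
      have hcos : Real.cos (ξ * x) = Real.cos (|x| * ξ) := by
        rw [← Real.cos_abs (ξ * x), ← Real.cos_abs (|x| * ξ)]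
        congr 1
        rw [abs_mul, abs_mul, abs_of_nonneg hξ0.le, abs_abs, mul_comm]
      simp only
      rw [← ENNReal.ofReal_mul (by positivity), hcos]
      congr 1
      rw [Real.mul_rpow hc0.le hξ0.le]
      have h1 : |x| ^ (1+p) ≠ 0 := (Real.rpow_pos_of_pos hc0 _).ne'
      have h2 : ξ ^ (1+p) ≠ 0 := (Real.rpow_pos_of_pos hξ0 _).ne'
      field_simp
    calc ∫⁻ ξ in Ioi (0:ℝ), ENNReal.ofReal ((1 - Real.cos (ξ * x)) / ξ ^ (1+p))
        = ∫⁻ ξ in Ioi (0:ℝ), ENNReal.ofReal (|x|^(1+p)) *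
          (fun u : ℝ => ENNReal.ofReal ((1 - Real.cos u) / u ^ (1+p))) (|x| * ξ) :=
          setLIntegral_congr_fun measurableSet_Ioi key
      _ = ENNReal.ofReal (|x|^(1+p)) *
          ∫⁻ ξ in Ioi (0:ℝ), (fun u : ℝ => ENNReal.ofReal ((1 - Real.cos u) / u ^ (1+p))) (|x| * ξ) :=
          lintegral_const_mul' _ _ ENNReal.ofReal_ne_top
      _ = ENNReal.ofReal (|x|^(1+p)) * (ENNReal.ofReal |x|⁻¹ * Kp p) := by
          rw [aux_scale (aux_kern_meas hp0) hc0]; rfl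
      _ = ENNReal.ofReal (|x| ^ p) * Kp p := by
          rw [← mul_assoc, ← ENNReal.ofReal_mul (by positivity)]
          congr 2
          rw [Real.rpow_add hc0, Real.rpow_one]
          field_simp

section Prob
variable {Ω : Type*} [MeasurableSpace Ω] (P : Measure Ω) [IsProbabilityMeasure P]
  (α : ℝ) (L : Ω → ℝ) (hL : Measurable L)
include hL

lemma aux_cos_integral
    (hchar : ∀ ξ : ℝ,
      ∫ ω, Complex.exp (((ξ * L ω : ℝ) : ℂ) * Complex.I) ∂P
        = Complex.exp (-((|ξ| ^ α : ℝ) : ℂ))) (ξ : ℝ) :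
    ∫ ω, Real.cos (ξ * L ω) ∂P = Real.exp (-(|ξ| ^ α)) := by
  have hm : Measurable fun ω => Complex.exp (((ξ * L ω : ℝ):ℂ) * Complex.I) :=
    Complex.measurable_exp.comp
      ((Complex.measurable_ofReal.comp (hL.const_mul ξ)).mul_const Complex.I)
  have hint : Integrable (fun ω => Complex.exp (((ξ * L ω : ℝ):ℂ) * Complex.I)) P := by
    refine (integrable_const (1:ℝ)).mono' hm.aestronglyMeasurable ?_
    filter_upwards with ω
    rw [Complex.norm_exp_ofReal_mul_I]
  have hre : ∫ ω, (Complex.exp (((ξ * L ω : ℝ):ℂ) * Complex.I)).re ∂P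
      = (∫ ω, Complex.exp (((ξ * L ω : ℝ):ℂ) * Complex.I) ∂P).re := by
    simpa using integral_re hint
  rw [hchar ξ] at hre
  simp_rw [Complex.exp_ofReal_mul_I_re] at hre
  rw [hre, ← Complex.ofReal_neg, ← Complex.ofReal_exp, Complex.ofReal_re]

lemma aux_cos_integrable (ξ : ℝ) :
    Integrable (fun ω => Real.cos (ξ * L ω)) P := by
  refine (integrable_const (1:ℝ)).mono'
    ((Real.measurable_cos.comp (hL.const_mul ξ)).aestronglyMeasurable) ?_
  filter_upwards with ω
  rw [Real.norm_eq_abs]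
  exact Real.abs_cos_le_one _

lemma aux_one_sub_cos
    (hchar : ∀ ξ : ℝ,
      ∫ ω, Complex.exp (((ξ * L ω : ℝ) : ℂ) * Complex.I) ∂P
        = Complex.exp (-((|ξ| ^ α : ℝ) : ℂ))) {ξ : ℝ} (hξ : 0 < ξ) :
    ∫⁻ ω, ENNReal.ofReal (1 - Real.cos (ξ * L ω)) ∂P
      = ENNReal.ofReal (1 - Real.exp (-(ξ ^ α))) := by
  have hint : Integrable (fun ω => 1 - Real.cos (ξ * L ω)) P :=
    (integrable_const 1).sub (aux_cos_integrable P L hL ξ)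
  rw [← ofReal_integral_eq_lintegral_ofReal hint
    (by filter_upwards with ω using by simp [Real.cos_le_one])]
  congr 1
  rw [integral_sub (integrable_const 1) (aux_cos_integrable P L hL ξ),
    aux_cos_integral P α L hL hchar ξ, abs_of_pos hξ]
  simp

lemma aux_moment (hα : α ∈ Set.Ioo (1/2 : ℝ) 1)
    (hchar : ∀ ξ : ℝ,
      ∫ ω, Complex.exp (((ξ * L ω : ℝ) : ℂ) * Complex.I) ∂P
        = Complex.exp (-((|ξ| ^ α : ℝ) : ℂ))) :
    Integrable (fun ω => |L ω| ^ (1 - α)) P := by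
  obtain ⟨hα1, hα2⟩ := hα
  set p : ℝ := 1 - α with hp
  have hp0 : 0 < p := by simp only [hp]; linarith
  have hp1 : p < 1 := by simp only [hp]; linarith
  have hmabs : Measurable fun ω => |L ω| ^ p :=
    (Real.continuous_rpow_const hp0.le).measurable.comp hL.abs
  -- Tonelli
  have hprodmeas : AEMeasurable
      (Function.uncurry fun (ω : Ω) (ξ : ℝ) =>
        ENNReal.ofReal ((1 - Real.cos (ξ * L ω)) / ξ ^ (1+p)))
      (P.prod (volume.restrict (Ioi (0:ℝ)))) := by
    apply Measurable.aemeasurable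
    apply ENNReal.measurable_ofReal.comp
    exact (measurable_const.sub
      (Real.measurable_cos.comp (measurable_snd.mul (hL.comp measurable_fst)))).div
      ((Real.continuous_rpow_const (by linarith)).measurable.comp measurable_snd)
  have key : (∫⁻ ω, ENNReal.ofReal (|L ω| ^ p) ∂P) * Kp p
      = ∫⁻ ξ in Ioi (0:ℝ), ENNReal.ofReal ((1 - Real.exp (-(ξ ^ α))) / ξ ^ (1+p)) := by
    calc (∫⁻ ω, ENNReal.ofReal (|L ω| ^ p) ∂P) * Kp p
        = ∫⁻ ω, ENNReal.ofReal (|L ω| ^ p) * Kp p ∂P :=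
          (lintegral_mul_const' (Kp p) _ (Kp_ne_top hp0 hp1)).symm
      _ = ∫⁻ ω, (∫⁻ ξ in Ioi (0:ℝ), ENNReal.ofReal ((1 - Real.cos (ξ * L ω)) / ξ ^ (1+p))) ∂P := by
          refine lintegral_congr fun ω => ?_
          rw [aux_pointwise hp0 hp1 (L ω)]
      _ = ∫⁻ ξ in Ioi (0:ℝ), ∫⁻ ω, ENNReal.ofReal ((1 - Real.cos (ξ * L ω)) / ξ ^ (1+p)) ∂P := by
          exact lintegral_lintegral_swap hprodmeas
      _ = ∫⁻ ξ in Ioi (0:ℝ), ENNReal.ofReal ((1 - Real.exp (-(ξ ^ α))) / ξ ^ (1+p)) := by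
          refine lintegral_congr_ae ?_
          filter_upwards [ae_restrict_mem measurableSet_Ioi] with ξ hξ
          have hξ0 : (0:ℝ) < ξ := hξ
          have hden : (0:ℝ) < ξ ^ (1+p) := Real.rpow_pos_of_pos hξ0 _
          have e1 : ∀ y : ℝ, ENNReal.ofReal (y / ξ ^ (1+p))
              = ENNReal.ofReal y * ENNReal.ofReal (ξ ^ (1+p))⁻¹ := by
            intro y
            rw [div_eq_mul_inv, ENNReal.ofReal_mul']
            positivity
          simp_rw [e1]
          rw [lintegral_mul_const' _ _ ENNReal.ofReal_ne_top,
            aux_one_sub_cos P α L hL hchar hξ0]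
  have hJ : (∫⁻ ω, ENNReal.ofReal (|L ω| ^ p) ∂P) * Kp p ≠ ∞ := by
    rw [key]
    refine aux_lint_ne_top (a := α - (1+p)) (b := -(1+p)) (by simp only [hp]; linarith)
      (by linarith) ?_ ?_
    · intro u hu hu1
      have h1 : 1 - Real.exp (-(u ^ α)) ≤ u ^ α := by
        have := Real.add_one_le_exp (-(u ^ α))
        linarith
      calc (1 - Real.exp (-(u ^ α))) / u ^ (1+p) ≤ u ^ α / u ^ (1+p) := by gcongr
        _ = u ^ (α - (1+p)) := (Real.rpow_sub hu _ _).symm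
    · intro u hu
      have hu0 : (0:ℝ) < u := by linarith
      have h1 : 1 - Real.exp (-(u ^ α)) ≤ 2 := by
        have := Real.exp_pos (-(u ^ α)); linarith
      rw [Real.rpow_neg hu0.le, mul_comm (2:ℝ), ← div_eq_inv_mul]
      gcongr
  have hM : ∫⁻ ω, ENNReal.ofReal (|L ω| ^ p) ∂P ≠ ∞ := by
    intro hM
    rw [hM, ENNReal.top_mul (Kp_pos hp0 hp1)] at hJ
    exact hJ rfl
  refine ⟨hmabs.aestronglyMeasurable, ?_⟩
  rw [hasFiniteIntegral_iff_ofReal (by filter_upwards with ω using Real.rpow_nonneg (abs_nonneg _) _)]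
  exact lt_top_iff_ne_top.2 hM

end Prob



/-- For `α ∈ (1/2, 1)` and a symmetric `α`-stable random variable `L₁` on `ℝ`
(characteristic function `E[e^{iξL₁}] = e^{-|ξ|^α}`), there exist constants `c > 0` and
`ϱ > 0` such that `c = α · E[sgn(c + ϱL₁)·|c + ϱL₁|^{1-α}]`. -/
theorem stmt0 {Ω : Type*} [MeasurableSpace Ω] (P : Measure Ω) [IsProbabilityMeasure P]
    (α : ℝ) (hα : α ∈ Set.Ioo (1/2 : ℝ) 1) (L : Ω → ℝ) (hL : Measurable L)
    (hchar : ∀ ξ : ℝ,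
      ∫ ω, Complex.exp (((ξ * L ω : ℝ) : ℂ) * Complex.I) ∂P
        = Complex.exp (-((|ξ| ^ α : ℝ) : ℂ))) :
    ∃ c > (0:ℝ), ∃ ϱ > (0:ℝ),
      c = α * ∫ ω, Real.sign (c + ϱ * L ω) * |c + ϱ * L ω| ^ (1 - α) ∂P := by
  have hα1 : 1/2 < α := hα.1
  have hα2 : α < 1 := hα.2
  set p : ℝ := 1 - α with hp
  have hp0 : 0 < p := by simp only [hp]; linarith
  have hp1 : p < 1 := by simp only [hp]; linarith
  have hint : Integrable (fun ω => |L ω| ^ p) P := aux_moment P α L hL hα hchar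
  set φ : ℝ → ℝ := fun u => Real.sign u * |u| ^ p with hφ
  have hφm : Measurable φ :=
    aux_measurable_sign.mul
      ((Real.continuous_rpow_const hp0.le).measurable.comp measurable_abs)
  have hshift : ∀ t : ℝ, Integrable (fun ω => φ (t + L ω)) P := by
    intro t
    refine ((integrable_const (|t| ^ p)).add hint).mono'
      ((hφm.comp (measurable_const.add hL)).aestronglyMeasurable) ?_
    filter_upwards with ω
    rw [Real.norm_eq_abs]
    calc |φ (t + L ω)| ≤ |t + L ω| ^ p := aux_abs_sign_mul _ _
      _ ≤ (|t| + |L ω|) ^ p := Real.rpow_le_rpow (abs_nonneg _) (abs_add_le _ _) hp0.le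
      _ ≤ |t| ^ p + |L ω| ^ p := aux_rpow_add_le (abs_nonneg _) (abs_nonneg _) hp0.le hp1.le
  -- dominated convergence
  have hdom : Tendsto (fun n : ℕ => ∫ ω, φ ((n:ℝ) + L ω) / (n:ℝ) ^ p ∂P) atTop (𝓝 1) := by
    have h := tendsto_integral_of_dominated_convergence (μ := P)
      (F := fun (n : ℕ) ω => φ ((n:ℝ) + L ω) / (n:ℝ) ^ p) (f := fun _ => (1:ℝ))
      (bound := fun ω => 1 + |L ω| ^ p)
      (fun n => ((hφm.comp (measurable_const.add hL)).div_const _).aestronglyMeasurable)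
      ((integrable_const 1).add hint)
      ?_ ?_
    · simpa using h
    · intro n
      filter_upwards with ω
      rcases Nat.eq_zero_or_pos n with rfl | hn
      · simp only [Nat.cast_zero, Real.zero_rpow hp0.ne', div_zero, norm_zero]
        positivity
      · have hn1 : (1:ℝ) ≤ (n:ℝ) := Nat.one_le_cast.2 hn
        have hnp : (0:ℝ) < (n:ℝ) ^ p := Real.rpow_pos_of_pos (by linarith) _
        rw [Real.norm_eq_abs, abs_div, abs_of_pos hnp, div_le_iff₀ hnp]
        calc |φ ((n:ℝ) + L ω)| ≤ |(n:ℝ) + L ω| ^ p := aux_abs_sign_mul _ _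
          _ ≤ ((n:ℝ) + |L ω|) ^ p := by
              apply Real.rpow_le_rpow (abs_nonneg _) ?_ hp0.le
              calc |(n:ℝ) + L ω| ≤ |(n:ℝ)| + |L ω| := abs_add_le _ _
                _ = (n:ℝ) + |L ω| := by rw [abs_of_nonneg (by linarith : (0:ℝ) ≤ (n:ℝ))]
          _ ≤ ((n:ℝ) * (1 + |L ω|)) ^ p := by
              apply Real.rpow_le_rpow (by positivity) ?_ hp0.le
              nlinarith [abs_nonneg (L ω)]
          _ = (n:ℝ) ^ p * (1 + |L ω|) ^ p :=
              Real.mul_rpow (by linarith) (by positivity)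
          _ = (1 + |L ω|) ^ p * (n:ℝ) ^ p := mul_comm _ _
          _ ≤ (1 + |L ω| ^ p) * (n:ℝ) ^ p := by
              apply mul_le_mul_of_nonneg_right ?_ hnp.le
              calc (1 + |L ω|) ^ p ≤ 1 ^ p + |L ω| ^ p :=
                    aux_rpow_add_le zero_le_one (abs_nonneg _) hp0.le hp1.le
                _ = 1 + |L ω| ^ p := by rw [Real.one_rpow]
    · filter_upwards with ω
      set x : ℝ := L ω with hx
      have hx1 : Tendsto (fun n : ℕ => 1 + x / (n:ℝ)) atTop (𝓝 1) := by
        have h0 := (tendsto_const_div_atTop_nhds_zero_nat x).const_add (1:ℝ)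
        simpa using h0
      have hx2 : Tendsto (fun n : ℕ => (1 + x / (n:ℝ)) ^ p) atTop (𝓝 1) := by
        have h2 := (Real.continuousAt_rpow_const 1 p (Or.inl one_ne_zero)).tendsto.comp hx1
        simpa [Real.one_rpow, Function.comp_def] using h2
      refine Tendsto.congr' ?_ hx2
      filter_upwards [eventually_ge_atTop 1,
        (tendsto_natCast_atTop_atTop (R := ℝ)).eventually_gt_atTop |x|] with n hn1 hnx
      have hn0 : (0:ℝ) < (n:ℝ) := lt_of_le_of_lt (abs_nonneg x) hnx
      have hpos : (0:ℝ) < (n:ℝ) + x := by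
        have := neg_abs_le x; linarith
      have hφeq : φ ((n:ℝ) + x) = ((n:ℝ) + x) ^ p := by
        rw [hφ]
        simp only
        rw [Real.sign_of_pos hpos, abs_of_pos hpos, one_mul]
      rw [hφeq, ← Real.div_rpow hpos.le hn0.le]
      congr 2
      field_simp
  -- extract a good n
  have hev : ∀ᶠ n : ℕ in atTop, 0 < ∫ ω, φ ((n:ℝ) + L ω) / (n:ℝ) ^ p ∂P :=
    hdom.eventually (eventually_gt_nhds (by norm_num))
  obtain ⟨n, hn1, hnpos⟩ := ((eventually_ge_atTop 1).and hev).exists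
  set t : ℝ := (n:ℝ) with ht
  have ht0 : (0:ℝ) < t := by
    rw [ht]; exact_mod_cast Nat.lt_of_lt_of_le Nat.zero_lt_one hn1
  have htp : (0:ℝ) < t ^ p := Real.rpow_pos_of_pos ht0 _
  set I : ℝ := ∫ ω, φ (t + L ω) ∂P with hI
  have hIpos : 0 < I := by
    have heq : ∫ ω, φ (t + L ω) / t ^ p ∂P = I / t ^ p := integral_div _ _
    rw [heq] at hnpos
    exact (div_pos_iff.1 hnpos).resolve_right (fun h => absurd htp (not_lt.2 h.2.le)) |>.1
  set g : ℝ := α * I with hg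
  have hgpos : 0 < g := mul_pos (by linarith) hIpos
  set X : ℝ := g * t ^ (-p) with hX
  have hXpos : 0 < X := mul_pos hgpos (Real.rpow_pos_of_pos ht0 _)
  set c : ℝ := X ^ α⁻¹ with hc
  have hcpos : 0 < c := Real.rpow_pos_of_pos hXpos _
  have hcα : c ^ α = X := by
    rw [hc, ← Real.rpow_mul hXpos.le, inv_mul_cancel₀ (by linarith : α ≠ 0), Real.rpow_one]
  refine ⟨c, hcpos, c / t, div_pos hcpos ht0, ?_⟩
  have hϱ : (0:ℝ) < c / t := div_pos hcpos ht0
  have hct : c / t * t = c := div_mul_cancel₀ c ht0.ne'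
  have hptw : ∀ ω, Real.sign (c + c / t * L ω) * |c + c / t * L ω| ^ (1-α)
      = (c / t) ^ p * φ (t + L ω) := by
    intro ω
    have h1 : c + c / t * L ω = c / t * (t + L ω) := by
      rw [mul_add, hct]
    rw [h1, aux_sign_const_mul hϱ, abs_mul, abs_of_pos hϱ,
      Real.mul_rpow hϱ.le (abs_nonneg _), hφ]
    simp only [← hp]
    ring
  calc c = c ^ p * c ^ α := by
        rw [← Real.rpow_add hcpos, hp]
        norm_num
    _ = c ^ p * (α * I * t ^ (-p)) := by rw [hcα, hX, hg]
    _ = α * ((c/t) ^ p * I) := by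
        rw [Real.div_rpow hcpos.le ht0.le, Real.rpow_neg ht0.le]
        ring
    _ = α * ∫ ω, Real.sign (c + c / t * L ω) * |c + c / t * L ω| ^ (1-α) ∂P := by
        congr 1
        rw [hI, ← integral_const_mul]
        refine (integral_congr_ae ?_).symm
        filter_upwards with ω using hptw ω
end

section
/- Let K > 1, d ≥ 1, α ∈ (0,2). Suppose A, B are invertible d×d real matrices with K^{-1}I ≤ AA* ≤ KI, K^{-1}I ≤ BB* ≤ KI, and ‖A - B‖ ≤ ε. Then there exists a constant C = C(K,d,α) such that for all y ∈ ℝ^d \ {0}: | |det(A^{-1})|/|A^{-1}y|^{d+α} - |det(B^{-1})|/|B^{-1}y|^{d+α} | ≤ C·ε/|y|^{d+α}. -/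
open Matrix Real

namespace Stmt12

variable {d : ℕ}

noncomputable def nr (v : Fin d → ℝ) : ℝ := Real.sqrt (∑ i, v i ^ 2)

lemma norm_toE (v : Fin d → ℝ) :
    ‖(WithLp.equiv 2 (∀ _ : Fin d, ℝ)).symm v‖ = nr v := by
  rw [EuclideanSpace.norm_eq, nr]
  congr 1
  refine Finset.sum_congr rfl fun i _ => ?_
  simp [WithLp.equiv_symm_apply, Real.norm_eq_abs, sq_abs]

lemma nr_nonneg (v : Fin d → ℝ) : 0 ≤ nr v := Real.sqrt_nonneg _

lemma nr_pos {v : Fin d → ℝ} (hv : v ≠ 0) : 0 < nr v := by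
  rw [← norm_toE]
  simpa using hv

lemma nr_sq (v : Fin d → ℝ) : nr v ^ 2 = ∑ i, v i ^ 2 :=
  Real.sq_sqrt (Finset.sum_nonneg fun i _ => sq_nonneg _)

lemma dot_self (v : Fin d → ℝ) : v ⬝ᵥ v = ∑ i, v i ^ 2 := by
  simp [dotProduct, sq]

lemma cauchy (v w : Fin d → ℝ) : v ⬝ᵥ w ≤ nr v * nr w := by
  have h := real_inner_le_norm ((WithLp.equiv 2 (∀ _ : Fin d, ℝ)).symm v)
    ((WithLp.equiv 2 (∀ _ : Fin d, ℝ)).symm w)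
  rw [norm_toE, norm_toE] at h
  refine le_trans (le_of_eq ?_) h
  rw [PiLp.inner_apply]
  simp [dotProduct, WithLp.equiv_symm_apply, mul_comm]

lemma abs_nr_sub_nr (v w : Fin d → ℝ) : |nr v - nr w| ≤ nr (v - w) := by
  have h := abs_norm_sub_norm_le ((WithLp.equiv 2 (∀ _ : Fin d, ℝ)).symm v)
    ((WithLp.equiv 2 (∀ _ : Fin d, ℝ)).symm w)
  rw [norm_toE, norm_toE] at h
  refine h.trans (le_of_eq ?_)
  rw [← norm_toE]
  congr 1

end Stmt12

namespace Stmt12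

-- from PSD hypotheses: quadratic form bounds for Aᵀ
lemma upper_sq {K : ℝ} {A : Matrix (Fin d) (Fin d) ℝ}
    (h : (K • (1 : Matrix (Fin d) (Fin d) ℝ) - A * Aᵀ).PosSemidef) (x : Fin d → ℝ) :
    ∑ i, (Aᵀ *ᵥ x) i ^ 2 ≤ K * ∑ i, x i ^ 2 := by
  have h2 := h.dotProduct_mulVec_nonneg x
  simp only [star_trivial, Matrix.sub_mulVec, dotProduct_sub, Matrix.smul_mulVec,
    Matrix.one_mulVec, dotProduct_smul, smul_eq_mul] at h2
  have key : x ⬝ᵥ ((A * Aᵀ) *ᵥ x) = (Aᵀ *ᵥ x) ⬝ᵥ (Aᵀ *ᵥ x) := by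
    rw [← Matrix.mulVec_mulVec, Matrix.dotProduct_mulVec, Matrix.mulVec_transpose]
  rw [key, dot_self, dot_self] at h2
  linarith

lemma lower_sq {K : ℝ} {A : Matrix (Fin d) (Fin d) ℝ}
    (h : (A * Aᵀ - K⁻¹ • (1 : Matrix (Fin d) (Fin d) ℝ)).PosSemidef) (x : Fin d → ℝ) :
    K⁻¹ * ∑ i, x i ^ 2 ≤ ∑ i, (Aᵀ *ᵥ x) i ^ 2 := by
  have h2 := h.dotProduct_mulVec_nonneg x
  simp only [star_trivial, Matrix.sub_mulVec, dotProduct_sub, Matrix.smul_mulVec,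
    Matrix.one_mulVec, dotProduct_smul, smul_eq_mul] at h2
  have key : x ⬝ᵥ ((A * Aᵀ) *ᵥ x) = (Aᵀ *ᵥ x) ⬝ᵥ (Aᵀ *ᵥ x) := by
    rw [← Matrix.mulVec_mulVec, Matrix.dotProduct_mulVec, Matrix.mulVec_transpose]
  rw [key, dot_self, dot_self] at h2
  linarith

-- turn squared bounds into nr bounds
lemma nr_le_of_sq_le {c : ℝ} (hc : 0 ≤ c) {v w : Fin d → ℝ}
    (h : ∑ i, v i ^ 2 ≤ c ^ 2 * ∑ i, w i ^ 2) : nr v ≤ c * nr w := by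
  have h1 : nr v ^ 2 ≤ (c * nr w) ^ 2 := by
    rw [nr_sq, mul_pow, nr_sq]; exact h
  exact (abs_le_of_sq_le_sq' h1 (mul_nonneg hc (nr_nonneg w))).2

end Stmt12

namespace Stmt12

section Sandwich

variable {K : ℝ} {A : Matrix (Fin d) (Fin d) ℝ} (hK : 1 < K)
  (hdet : IsUnit A.det)
  (hL : (A * Aᵀ - K⁻¹ • (1 : Matrix (Fin d) (Fin d) ℝ)).PosSemidef)
  (hU : (K • (1 : Matrix (Fin d) (Fin d) ℝ) - A * Aᵀ).PosSemidef)

include hK hU in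
lemma nAT_le (x : Fin d → ℝ) : nr (Aᵀ *ᵥ x) ≤ Real.sqrt K * nr x := by
  refine nr_le_of_sq_le (Real.sqrt_nonneg K) ?_
  rw [Real.sq_sqrt (by linarith : (0:ℝ) ≤ K)]
  exact upper_sq hU x

include hK hL in
lemma nx_le (x : Fin d → ℝ) : nr x ≤ Real.sqrt K * nr (Aᵀ *ᵥ x) := by
  refine nr_le_of_sq_le (Real.sqrt_nonneg K) ?_
  rw [Real.sq_sqrt (by linarith : (0:ℝ) ≤ K)]
  have h := lower_sq hL x
  have hK0 : (0:ℝ) < K := by linarith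
  rw [inv_mul_le_iff₀ hK0] at h
  exact h

include hK hdet hL in
lemma invT_le (x : Fin d → ℝ) : nr ((Aᵀ)⁻¹ *ᵥ x) ≤ Real.sqrt K * nr x := by
  have h := nx_le (A := A) hK hL ((Aᵀ)⁻¹ *ᵥ x)
  rwa [Matrix.mulVec_mulVec, Matrix.mul_nonsing_inv _ (by rwa [Matrix.det_transpose]),
    Matrix.one_mulVec] at h

include hK hdet hL in
lemma inv_le (y : Fin d → ℝ) : nr (A⁻¹ *ᵥ y) ≤ Real.sqrt K * nr y := by
  set z := A⁻¹ *ᵥ y with hzdef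
  have hz : A *ᵥ z = y := by
    rw [hzdef, Matrix.mulVec_mulVec, Matrix.mul_nonsing_inv _ hdet, Matrix.one_mulVec]
  have key0 : ((Aᵀ)⁻¹ *ᵥ z) ⬝ᵥ (A *ᵥ z) = z ⬝ᵥ z := by
    rw [Matrix.dotProduct_mulVec, ← Matrix.mulVec_transpose, Matrix.mulVec_mulVec,
      Matrix.mul_nonsing_inv _ (by rwa [Matrix.det_transpose]), Matrix.one_mulVec]
  have key : z ⬝ᵥ z = ((Aᵀ)⁻¹ *ᵥ z) ⬝ᵥ y := by rw [← key0, hz]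
  have h1 : z ⬝ᵥ z ≤ (Real.sqrt K * nr z) * nr y := by
    rw [key]
    refine (cauchy _ _).trans ?_
    exact mul_le_mul_of_nonneg_right (invT_le hK hdet hL z) (nr_nonneg y)
  rw [dot_self, ← nr_sq] at h1
  by_contra hcon
  push_neg at hcon
  nlinarith [nr_nonneg z, nr_nonneg y, Real.sqrt_nonneg K,
    mul_nonneg (Real.sqrt_nonneg K) (nr_nonneg y)]

include hK hdet hU in
lemma inv_ge (y : Fin d → ℝ) : nr y ≤ Real.sqrt K * nr (A⁻¹ *ᵥ y) := by
  set z := A⁻¹ *ᵥ y with hzdef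
  have hz : A *ᵥ z = y := by
    rw [hzdef, Matrix.mulVec_mulVec, Matrix.mul_nonsing_inv _ hdet, Matrix.one_mulVec]
  have key0 : y ⬝ᵥ (A *ᵥ z) = (Aᵀ *ᵥ y) ⬝ᵥ z := by
    rw [Matrix.dotProduct_mulVec, ← Matrix.mulVec_transpose]
  have key : y ⬝ᵥ y = (Aᵀ *ᵥ y) ⬝ᵥ z := by rw [← key0, hz]
  have h1 : y ⬝ᵥ y ≤ (Real.sqrt K * nr y) * nr z := by
    rw [key]
    refine (cauchy _ _).trans ?_
    exact mul_le_mul_of_nonneg_right (nAT_le hK hU y) (nr_nonneg z)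
  rw [dot_self, ← nr_sq] at h1
  by_contra hcon
  push_neg at hcon
  nlinarith [nr_nonneg z, nr_nonneg y, Real.sqrt_nonneg K,
    mul_nonneg (Real.sqrt_nonneg K) (nr_nonneg z)]

end Sandwich

end Stmt12

namespace Stmt12

variable {d : ℕ}

lemma nr_single (j : Fin d) : nr (Pi.single j (1:ℝ)) = 1 := by
  have : ∑ i, (Pi.single j (1:ℝ) i) ^ 2 = (1:ℝ) := by
    rw [Finset.sum_eq_single j]
    · simp
    · intro i _ hij; simp [Pi.single_apply, hij]
    · simp
  rw [nr, this, Real.sqrt_one]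

lemma nr_neg (v : Fin d → ℝ) : nr (-v) = nr v := by
  simp [nr]

lemma abs_apply_le_nr (v : Fin d → ℝ) (j : Fin d) : |v j| ≤ nr v := by
  rw [← Real.sqrt_sq_eq_abs]
  exact Real.sqrt_le_sqrt (Finset.single_le_sum (fun i _ => sq_nonneg (v i)) (Finset.mem_univ j))

lemma mulVec_single_col (M : Matrix (Fin d) (Fin d) ℝ) (j : Fin d) :
    M *ᵥ Pi.single j (1:ℝ) = fun i => M i j := by
  ext i
  simp [Matrix.mulVec, dotProduct, Pi.single_apply]

lemma entry_abs_le (M : Matrix (Fin d) (Fin d) ℝ) {c : ℝ}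
    (h : ∀ v, nr (M *ᵥ v) ≤ c * nr v) (i j : Fin d) : |M i j| ≤ c := by
  have h1 := abs_apply_le_nr (M *ᵥ Pi.single j (1:ℝ)) i
  have h2 := h (Pi.single j (1:ℝ))
  rw [nr_single, mul_one] at h2
  rw [mulVec_single_col] at h1 h2
  exact h1.trans h2

/-- The determinant as a continuous multilinear map in the rows. -/
noncomputable def detCML (d : ℕ) : ContinuousMultilinearMap ℝ (fun _ : Fin d => (Fin d → ℝ)) ℝ :=
  MultilinearMap.mkContinuous
    (Matrix.detRowAlternating (n := Fin d) (R := ℝ)).toMultilinearMap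
    (d.factorial) (by
      intro m
      show ‖(Matrix.of m).det‖ ≤ _
      rw [Matrix.det_apply]
      refine (norm_sum_le _ _).trans ?_
      have hbound : ∀ σ : Equiv.Perm (Fin d),
          ‖Equiv.Perm.sign σ • ∏ i, Matrix.of m (σ i) i‖ ≤ ∏ i, ‖m i‖ := by
        intro σ
        have h1 : ‖Equiv.Perm.sign σ • ∏ i, Matrix.of m (σ i) i‖
            = ‖∏ i, m (σ i) i‖ := by
          rcases Int.units_eq_one_or (Equiv.Perm.sign σ) with h | h <;>
            simp [h, Units.smul_def]
        rw [h1]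
        have h2 : ‖∏ i, m (σ i) i‖ ≤ ∏ i, ‖m (σ i)‖ := by
          rw [norm_prod]
          exact Finset.prod_le_prod (fun i _ => norm_nonneg _)
            (fun i _ => norm_le_pi_norm (m (σ i)) i)
        refine h2.trans (le_of_eq ?_)
        exact Equiv.prod_comp σ (fun i => ‖m i‖)
      refine (Finset.sum_le_sum (fun σ _ => hbound σ)).trans ?_
      rw [Finset.sum_const, Finset.card_univ]
      simp [Fintype.card_perm, mul_comm]
      )

lemma detCML_apply (M : Matrix (Fin d) (Fin d) ℝ) : detCML d (fun i => M i) = M.det := rfl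

lemma detCML_norm_le : ‖detCML d‖ ≤ (d.factorial : ℝ) :=
  MultilinearMap.mkContinuous_norm_le _ (by positivity) _

end Stmt12

namespace Stmt12

variable {d : ℕ}

lemma det_diff (M N : Matrix (Fin d) (Fin d) ℝ) {c δ : ℝ} (hc : 0 ≤ c) (hδ : 0 ≤ δ)
    (hM : ∀ i j, |M i j| ≤ c) (hN : ∀ i j, |N i j| ≤ c)
    (hMN : ∀ i j, |M i j - N i j| ≤ δ) :
    |M.det - N.det| ≤ (d.factorial : ℝ) * d * c ^ (d - 1) * δ := by
  have h := (detCML d).norm_image_sub_le (fun i => M i) (fun i => N i)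
  rw [detCML_apply, detCML_apply] at h
  have hMn : ‖(fun i => M i : ∀ _ : Fin d, Fin d → ℝ)‖ ≤ c := by
    rw [pi_norm_le_iff_of_nonneg hc]
    intro i
    rw [pi_norm_le_iff_of_nonneg hc]
    intro j
    exact hM i j
  have hNn : ‖(fun i => N i : ∀ _ : Fin d, Fin d → ℝ)‖ ≤ c := by
    rw [pi_norm_le_iff_of_nonneg hc]
    intro i
    rw [pi_norm_le_iff_of_nonneg hc]
    intro j
    exact hN i j
  have hdiff : ‖((fun i => M i) - (fun i => N i) : ∀ _ : Fin d, Fin d → ℝ)‖ ≤ δ := by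
    rw [pi_norm_le_iff_of_nonneg hδ]
    intro i
    rw [pi_norm_le_iff_of_nonneg hδ]
    intro j
    exact hMN i j
  have hmax : max ‖(fun i => M i : ∀ _ : Fin d, Fin d → ℝ)‖
      ‖(fun i => N i : ∀ _ : Fin d, Fin d → ℝ)‖ ≤ c := max_le hMn hNn
  calc |M.det - N.det| ≤ ‖detCML d‖ * (Fintype.card (Fin d)) *
        max ‖(fun i => M i : ∀ _ : Fin d, Fin d → ℝ)‖
          ‖(fun i => N i : ∀ _ : Fin d, Fin d → ℝ)‖ ^ (Fintype.card (Fin d) - 1) *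
        ‖((fun i => M i) - (fun i => N i) : ∀ _ : Fin d, Fin d → ℝ)‖ := h
    _ ≤ (d.factorial : ℝ) * d * c ^ (d - 1) * δ := by
        rw [Fintype.card_fin]
        have h0 : (0:ℝ) ≤ max ‖(fun i => M i : ∀ _ : Fin d, Fin d → ℝ)‖
            ‖(fun i => N i : ∀ _ : Fin d, Fin d → ℝ)‖ :=
          le_trans (norm_nonneg _) (le_max_left _ _)
        refine mul_le_mul (mul_le_mul (mul_le_mul detCML_norm_le le_rfl
          (Nat.cast_nonneg d) (Nat.cast_nonneg _))
          (pow_le_pow_left₀ h0 hmax _) (pow_nonneg h0 _)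
          (mul_nonneg (Nat.cast_nonneg _) (Nat.cast_nonneg _)))
          hdiff (norm_nonneg _) ?_
        exact mul_nonneg (mul_nonneg (Nat.cast_nonneg _) (Nat.cast_nonneg _))
          (pow_nonneg hc _)

lemma rpow_mvt {p m M a b : ℝ} (hp : 1 ≤ p) (hm : 0 < m)
    (ha : a ∈ Set.Icc m M) (hb : b ∈ Set.Icc m M) :
    |a ^ p - b ^ p| ≤ p * M ^ (p - 1) * |a - b| := by
  have hbound : ∀ t ∈ Set.Icc m M, ‖p * t ^ (p - 1)‖ ≤ p * M ^ (p - 1) := by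
    intro t ht
    have ht0 : 0 < t := lt_of_lt_of_le hm ht.1
    rw [Real.norm_eq_abs, abs_of_nonneg (by positivity)]
    exact mul_le_mul_of_nonneg_left
      (Real.rpow_le_rpow ht0.le ht.2 (by linarith)) (by linarith)
  have h := Convex.norm_image_sub_le_of_norm_hasDerivWithin_le
    (f := fun t : ℝ => t ^ p) (f' := fun t => p * t ^ (p - 1)) (s := Set.Icc m M)
    (fun t _ => (Real.hasDerivAt_rpow_const (Or.inr hp)).hasDerivWithinAt)
    hbound (convex_Icc m M) hb ha
  simpa [Real.norm_eq_abs] using h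

lemma final_calc {DA DB a b u e L1 Dm L2 ε : ℝ}
    (hDB : 0 ≤ DB) (hDm : DB ≤ Dm)
    (ha : 0 < a) (hb : 0 < b) (hu : 0 < u) (he : 0 < e)
    (h1 : |DA - DB| ≤ L1 * ε) (h3 : |a - b| ≤ L2 * ε * u)
    (h4 : u ≤ e * a) (h5 : u ≤ e * b)
    (hε : 0 ≤ ε) (hL1 : 0 ≤ L1) (hL2 : 0 ≤ L2) :
    |DA / a - DB / b| ≤ (L1 * e + Dm * L2 * e ^ 2 + 1) * ε / u := by
  have hDm0 : 0 ≤ Dm := hDB.trans hDm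
  have key : DA / a - DB / b = (DA - DB) / a + DB * (b - a) / (a * b) := by
    field_simp
    ring
  have t1 : |(DA - DB) / a| ≤ L1 * e * ε / u := by
    rw [abs_div, abs_of_pos ha, div_le_div_iff₀ ha hu]
    nlinarith [mul_le_mul h1 h4 hu.le (by positivity : (0:ℝ) ≤ L1 * ε)]
  have hXY : |DB * (b - a)| ≤ Dm * (L2 * ε * u) := by
    rw [abs_mul, abs_of_nonneg hDB, abs_sub_comm]
    exact mul_le_mul hDm h3 (abs_nonneg _) hDm0
  have huu : u * u ≤ (e * a) * (e * b) := mul_le_mul h4 h5 hu.le (by positivity)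
  have t2 : |DB * (b - a) / (a * b)| ≤ Dm * L2 * e ^ 2 * ε / u := by
    rw [abs_div, abs_of_pos (by positivity : (0:ℝ) < a * b),
      div_le_div_iff₀ (by positivity : (0:ℝ) < a * b) hu]
    nlinarith [mul_le_mul_of_nonneg_right hXY hu.le,
      mul_le_mul_of_nonneg_left huu (by positivity : (0:ℝ) ≤ Dm * L2 * ε)]
  calc |DA / a - DB / b| = |(DA - DB) / a + DB * (b - a) / (a * b)| := by rw [key]
    _ ≤ |(DA - DB) / a| + |DB * (b - a) / (a * b)| := abs_add_le _ _
    _ ≤ L1 * e * ε / u + Dm * L2 * e ^ 2 * ε / u := add_le_add t1 t2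
    _ ≤ (L1 * e + Dm * L2 * e ^ 2 + 1) * ε / u := by
        rw [← add_div, div_le_div_iff₀ hu hu]
        nlinarith [mul_nonneg hε hu.le, mul_pos hu hu]

end Stmt12

namespace Stmt12

variable {d : ℕ}

lemma det_bound (M : Matrix (Fin d) (Fin d) ℝ) {c : ℝ} (hc : 0 ≤ c)
    (hM : ∀ i j, |M i j| ≤ c) : |M.det| ≤ (d.factorial : ℝ) * c ^ d := by
  have h := (detCML d).le_opNorm (fun i => M i)
  rw [detCML_apply] at h
  refine le_trans h ?_
  have hrow : ∀ i : Fin d, ‖(M i : Fin d → ℝ)‖ ≤ c := by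
    intro i
    rw [pi_norm_le_iff_of_nonneg hc]
    exact hM i
  calc ‖detCML d‖ * ∏ i, ‖(fun i => M i : ∀ _ : Fin d, Fin d → ℝ) i‖
      ≤ (d.factorial : ℝ) * ∏ _i : Fin d, c := by
        refine mul_le_mul detCML_norm_le
          (Finset.prod_le_prod (fun i _ => norm_nonneg _) (fun i _ => hrow i))
          (Finset.prod_nonneg (fun i _ => norm_nonneg _)) (Nat.cast_nonneg _)
    _ = (d.factorial : ℝ) * c ^ d := by
        rw [Finset.prod_const, Finset.card_univ, Fintype.card_fin]

end Stmt12


open Stmt12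

/-- Stability of the kernel `y ↦ |det(A⁻¹)|/|A⁻¹y|^{d+α}` under perturbation of a
uniformly elliptic matrix: for `K > 1`, `d ≥ 1`, `α ∈ (0,2)` there is `C = C(K,d,α)` such
that if `A, B` are invertible with `K⁻¹I ≤ AA* ≤ KI`, `K⁻¹I ≤ BB* ≤ KI` and
`‖A - B‖ ≤ ε` (operator norm, w.r.t. the Euclidean norm `|v| = √(∑ v_i²)`), then for all
`y ≠ 0`: `| |det A⁻¹|/|A⁻¹y|^{d+α} - |det B⁻¹|/|B⁻¹y|^{d+α} | ≤ Cε/|y|^{d+α}`. -/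
theorem stmt12 (K : ℝ) (hK : 1 < K) (d : ℕ) (hd : 1 ≤ d) (α : ℝ)
    (hα : α ∈ Set.Ioo (0:ℝ) 2) :
    ∃ C > (0:ℝ), ∀ (A B : Matrix (Fin d) (Fin d) ℝ) (ε : ℝ),
      IsUnit A.det → IsUnit B.det →
      (A * Aᵀ - K⁻¹ • (1 : Matrix (Fin d) (Fin d) ℝ)).PosSemidef →
      (K • (1 : Matrix (Fin d) (Fin d) ℝ) - A * Aᵀ).PosSemidef →
      (B * Bᵀ - K⁻¹ • (1 : Matrix (Fin d) (Fin d) ℝ)).PosSemidef →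
      (K • (1 : Matrix (Fin d) (Fin d) ℝ) - B * Bᵀ).PosSemidef →
      (∀ y : Fin d → ℝ,
        Real.sqrt (∑ i, ((A - B).mulVec y i) ^ 2) ≤ ε * Real.sqrt (∑ i, (y i) ^ 2)) →
      ∀ y : Fin d → ℝ, y ≠ 0 →
        |(|A⁻¹.det| / Real.sqrt (∑ i, (A⁻¹.mulVec y i) ^ 2) ^ ((d : ℝ) + α))
            - |B⁻¹.det| / Real.sqrt (∑ i, (B⁻¹.mulVec y i) ^ 2) ^ ((d : ℝ) + α)|
          ≤ C * ε / Real.sqrt (∑ i, (y i) ^ 2) ^ ((d : ℝ) + α) := by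
  have hK0 : (0:ℝ) < K := by linarith
  set s : ℝ := Real.sqrt K with hsdef
  have hs1 : 1 < s := by
    rw [hsdef, show (1:ℝ) = Real.sqrt 1 by simp]
    exact Real.sqrt_lt_sqrt (by norm_num) hK
  have hs0 : 0 < s := lt_trans one_pos hs1
  have hss : s * s = K := Real.mul_self_sqrt hK0.le
  have hsK : s ≤ K := by nlinarith
  set p : ℝ := (d : ℝ) + α with hpdef
  have hd1 : (1:ℝ) ≤ (d:ℝ) := by exact_mod_cast hd
  have hp1 : 1 ≤ p := by have := hα.1; simp only [hpdef]; linarith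
  have hp0 : 0 < p := lt_of_lt_of_le one_pos hp1
  set e : ℝ := s ^ p with hedef
  have he : 0 < e := Real.rpow_pos_of_pos hs0 p
  set L1 : ℝ := (d.factorial : ℝ) * d * K ^ (d - 1) * K with hL1def
  set Dm : ℝ := (d.factorial : ℝ) * K ^ d with hDmdef
  set L2 : ℝ := p * s ^ (p - 1) * K with hL2def
  have hL1nn : 0 ≤ L1 := by
    rw [hL1def]
    exact mul_nonneg (mul_nonneg (mul_nonneg (Nat.cast_nonneg _) (Nat.cast_nonneg _))
      (pow_nonneg hK0.le _)) hK0.le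
  have hDmnn : 0 ≤ Dm := mul_nonneg (Nat.cast_nonneg _) (pow_nonneg hK0.le _)
  have hL2nn : 0 ≤ L2 :=
    mul_nonneg (mul_nonneg hp0.le (Real.rpow_nonneg hs0.le _)) hK0.le
  refine ⟨L1 * e + Dm * L2 * e ^ 2 + 1, ?_, ?_⟩
  · have := mul_nonneg hL1nn he.le
    have := mul_nonneg (mul_nonneg hDmnn hL2nn) (sq_nonneg e)
    nlinarith
  intro A B ε hdA hdB hA1 hA2 hB1 hB2 hε y hy
  -- reinterpret via nr
  have hεn : ∀ v : Fin d → ℝ, nr ((A - B) *ᵥ v) ≤ ε * nr v := hε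
  have hε0 : 0 ≤ ε := by
    have h0 := hεn (Pi.single (⟨0, hd⟩ : Fin d) 1)
    rw [nr_single, mul_one] at h0
    exact le_trans (nr_nonneg _) h0
  -- basic norms
  have hny : 0 < nr y := nr_pos hy
  have hAle : ∀ v, nr (A⁻¹ *ᵥ v) ≤ s * nr v := inv_le hK hdA hA1
  have hBle : ∀ v, nr (B⁻¹ *ᵥ v) ≤ s * nr v := inv_le hK hdB hB1
  have hAge : ∀ v, nr v ≤ s * nr (A⁻¹ *ᵥ v) := inv_ge hK hdA hA2
  have hBge : ∀ v, nr v ≤ s * nr (B⁻¹ *ᵥ v) := inv_ge hK hdB hB2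
  have hnA : 0 < nr (A⁻¹ *ᵥ y) := by nlinarith [hAge y, nr_nonneg (A⁻¹ *ᵥ y)]
  have hnB : 0 < nr (B⁻¹ *ᵥ y) := by nlinarith [hBge y, nr_nonneg (B⁻¹ *ᵥ y)]
  -- difference of inverses
  have hfact : A⁻¹ * (B - A) * B⁻¹ = A⁻¹ - B⁻¹ := by
    rw [Matrix.mul_sub, Matrix.sub_mul, Matrix.mul_assoc, Matrix.mul_nonsing_inv _ hdB,
      Matrix.nonsing_inv_mul _ hdA, Matrix.mul_one, Matrix.one_mul]
  have hABdiff : ∀ v, nr ((A⁻¹ - B⁻¹) *ᵥ v) ≤ K * ε * nr v := by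
    intro v
    rw [← hfact, ← Matrix.mulVec_mulVec, ← Matrix.mulVec_mulVec]
    have e1 : (B - A) *ᵥ (B⁻¹ *ᵥ v) = -((A - B) *ᵥ (B⁻¹ *ᵥ v)) := by
      rw [← Matrix.neg_mulVec, neg_sub]
    calc nr (A⁻¹ *ᵥ ((B - A) *ᵥ (B⁻¹ *ᵥ v)))
        ≤ s * nr ((B - A) *ᵥ (B⁻¹ *ᵥ v)) := hAle _
      _ = s * nr ((A - B) *ᵥ (B⁻¹ *ᵥ v)) := by rw [e1, nr_neg]
      _ ≤ s * (ε * nr (B⁻¹ *ᵥ v)) :=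
          mul_le_mul_of_nonneg_left (hεn _) hs0.le
      _ ≤ s * (ε * (s * nr v)) := by
          refine mul_le_mul_of_nonneg_left
            (mul_le_mul_of_nonneg_left (hBle v) hε0) hs0.le
      _ = K * ε * nr v := by rw [← hss]; ring
  -- entries
  have hAent : ∀ i j, |A⁻¹ i j| ≤ K := fun i j =>
    (entry_abs_le A⁻¹ hAle i j).trans hsK
  have hBent : ∀ i j, |B⁻¹ i j| ≤ K := fun i j =>
    (entry_abs_le B⁻¹ hBle i j).trans hsK
  have hdiffent : ∀ i j, |A⁻¹ i j - B⁻¹ i j| ≤ K * ε := fun i j =>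
    entry_abs_le (A⁻¹ - B⁻¹) hABdiff i j
  -- determinant difference
  have h1 : |(|A⁻¹.det| - |B⁻¹.det|)| ≤ L1 * ε := by
    refine (abs_abs_sub_abs_le_abs_sub _ _).trans ?_
    refine (det_diff A⁻¹ B⁻¹ hK0.le (by positivity) hAent hBent hdiffent).trans ?_
    rw [hL1def]; ring_nf; rfl
  have hDmB : |B⁻¹.det| ≤ Dm := by
    refine (det_bound B⁻¹ hK0.le hBent).trans_eq ?_
    rw [hDmdef]
  -- rpow difference
  have hmemA : nr (A⁻¹ *ᵥ y) ∈ Set.Icc (s⁻¹ * nr y) (s * nr y) := by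
    constructor
    · rw [inv_mul_le_iff₀ hs0]; exact hAge y
    · exact hAle y
  have hmemB : nr (B⁻¹ *ᵥ y) ∈ Set.Icc (s⁻¹ * nr y) (s * nr y) := by
    constructor
    · rw [inv_mul_le_iff₀ hs0]; exact hBge y
    · exact hBle y
  have hsub : |nr (A⁻¹ *ᵥ y) - nr (B⁻¹ *ᵥ y)| ≤ K * ε * nr y := by
    refine (abs_nr_sub_nr _ _).trans ?_
    have : A⁻¹ *ᵥ y - B⁻¹ *ᵥ y = (A⁻¹ - B⁻¹) *ᵥ y := (Matrix.sub_mulVec _ _ _).symm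
    rw [this]
    exact hABdiff y
  have hppow : nr y ^ (p - 1) * nr y = nr y ^ p := by
    rw [← Real.rpow_add_one hny.ne' (p - 1), sub_add_cancel]
  have h3 : |nr (A⁻¹ *ᵥ y) ^ p - nr (B⁻¹ *ᵥ y) ^ p| ≤ L2 * ε * nr y ^ p := by
    calc |nr (A⁻¹ *ᵥ y) ^ p - nr (B⁻¹ *ᵥ y) ^ p|
        ≤ p * (s * nr y) ^ (p - 1) * |nr (A⁻¹ *ᵥ y) - nr (B⁻¹ *ᵥ y)| :=
          rpow_mvt hp1 (by positivity) hmemA hmemB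
      _ ≤ p * (s * nr y) ^ (p - 1) * (K * ε * nr y) := by
          refine mul_le_mul_of_nonneg_left hsub ?_
          positivity
      _ = L2 * ε * nr y ^ p := by
          rw [Real.mul_rpow hs0.le hny.le, hL2def, ← hppow]; ring
  -- u ≤ e * a
  have h4 : nr y ^ p ≤ e * nr (A⁻¹ *ᵥ y) ^ p := by
    calc nr y ^ p ≤ (s * nr (A⁻¹ *ᵥ y)) ^ p :=
          Real.rpow_le_rpow hny.le (hAge y) hp0.le
      _ = e * nr (A⁻¹ *ᵥ y) ^ p := by
          rw [Real.mul_rpow hs0.le (nr_nonneg _), hedef]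
  have h5 : nr y ^ p ≤ e * nr (B⁻¹ *ᵥ y) ^ p := by
    calc nr y ^ p ≤ (s * nr (B⁻¹ *ᵥ y)) ^ p :=
          Real.rpow_le_rpow hny.le (hBge y) hp0.le
      _ = e * nr (B⁻¹ *ᵥ y) ^ p := by
          rw [Real.mul_rpow hs0.le (nr_nonneg _), hedef]
  exact final_calc (abs_nonneg _) hDmB (Real.rpow_pos_of_pos hnA p)
    (Real.rpow_pos_of_pos hnB p) (Real.rpow_pos_of_pos hny p) he
    h1 h3 h4 h5 hε0 hL1nn hL2nn
end
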